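/- Two-dimensional analogue of the orientation proposition: if u ∈ ℝ² satisfies ‖u‖ = 1 and J₂(v) ≤ J₂(u) for every v ∈ ℝ² with ‖v‖ = 1, then u ∈ {±e₁, ±e₂}, where e₁, e₂ is the standard basis of ℝ². -/

import Mathlib

open scoped RealInnerProductSpace

/-- The planar image-source grid `G₂`: points `(ε₁d₁ + 2q₁L₁, ε₂d₂ + 2q₂L₂)`
with `εᵢ ∈ {-1, 1}` and `qᵢ ∈ {0, …, Nᵢ/2 - 1}`. -/
noncomputable def grid2 (L d : Fin 2 → ℝ) (N : Fin 2 → ℕ) : Set (EuclideanSpace ℝ (Fin 2)) :=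
  {x | ∃ (ε : Fin 2 → ℝ) (q : Fin 2 → ℤ),
    (∀ i, ε i = 1 ∨ ε i = -1) ∧
    (∀ i, 0 ≤ q i ∧ q i < (N i / 2 : ℕ)) ∧
    (∀ i, x i = ε i * d i + 2 * (q i : ℝ) * L i)}

/-- The planar orthogonality score `J₂(u)`: the number of ordered pairs
`(s, p) ∈ G₂ × G₂` with `⟨u, s - p⟩ = 0`. -/
noncomputable def J2 (L d : Fin 2 → ℝ) (N : Fin 2 → ℕ) (u : EuclideanSpace ℝ (Fin 2)) : ℕ :=
  {sp : EuclideanSpace ℝ (Fin 2) × EuclideanSpace ℝ (Fin 2) |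
    sp.1 ∈ grid2 L d N ∧ sp.2 ∈ grid2 L d N ∧ ⟪u, sp.1 - sp.2⟫ = 0}.ncard

/-- The finite set of possible `i`-th coordinates of grid points. -/
noncomputable def SF (L d : Fin 2 → ℝ) (N : Fin 2 → ℕ) (i : Fin 2) : Finset ℝ :=
  ((Finset.range (N i / 2)).image fun q : ℕ => d i + 2 * q * L i) ∪
  ((Finset.range (N i / 2)).image fun q : ℕ => -(d i) + 2 * q * L i)

lemma mem_SF {L d : Fin 2 → ℝ} {N : Fin 2 → ℕ} {i : Fin 2} {y : ℝ} :
    y ∈ SF L d N i ↔ ∃ (ε : ℝ) (q : ℤ), (ε = 1 ∨ ε = -1) ∧ (0 ≤ q ∧ q < (N i / 2 : ℕ)) ∧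
      y = ε * d i + 2 * (q : ℝ) * L i := by
  simp only [SF, Finset.mem_union, Finset.mem_image, Finset.mem_range]
  constructor
  · rintro (⟨q, hq, rfl⟩ | ⟨q, hq, rfl⟩)
    · exact ⟨1, q, Or.inl rfl, ⟨Int.ofNat_nonneg q, by exact_mod_cast hq⟩, by push_cast; ring⟩
    · exact ⟨-1, q, Or.inr rfl, ⟨Int.ofNat_nonneg q, by exact_mod_cast hq⟩, by push_cast; ring⟩
  · rintro ⟨ε, q, hε, ⟨hq0, hq1⟩, rfl⟩
    lift q to ℕ using hq0
    rcases hε with rfl | rfl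
    · exact Or.inl ⟨q, by exact_mod_cast hq1, by push_cast; ring⟩
    · exact Or.inr ⟨q, by exact_mod_cast hq1, by push_cast; ring⟩

lemma mem_grid2 {L d : Fin 2 → ℝ} {N : Fin 2 → ℕ} {x : EuclideanSpace ℝ (Fin 2)} :
    x ∈ grid2 L d N ↔ x 0 ∈ SF L d N 0 ∧ x 1 ∈ SF L d N 1 := by
  constructor
  · rintro ⟨ε, q, hε, hq, hx⟩
    exact ⟨mem_SF.2 ⟨ε 0, q 0, hε 0, hq 0, hx 0⟩, mem_SF.2 ⟨ε 1, q 1, hε 1, hq 1, hx 1⟩⟩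
  · rintro ⟨h0, h1⟩
    obtain ⟨ε0, q0, hε0, hq0, hx0⟩ := mem_SF.1 h0
    obtain ⟨ε1, q1, hε1, hq1, hx1⟩ := mem_SF.1 h1
    refine ⟨![ε0, ε1], ![q0, q1], ?_, ?_, ?_⟩ <;> intro i <;> fin_cases i <;>
      simp only [Matrix.cons_val_zero, Matrix.cons_val_one, Matrix.head_cons] <;>
      first
        | exact hε0 | exact hε1 | exact hq0 | exact hq1 | exact hx0 | exact hx1

lemma inner_formula (u v : EuclideanSpace ℝ (Fin 2)) :
    ⟪u, v⟫ = u 0 * v 0 + u 1 * v 1 := by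
  simp [PiLp.inner_apply, Fin.sum_univ_two, RCLike.inner_apply, mul_comm]

open Classical in
/-- The pairs set realized as a `Finset` of quadruples of coordinates. -/
noncomputable def TF (L d : Fin 2 → ℝ) (N : Fin 2 → ℕ) (u : EuclideanSpace ℝ (Fin 2)) :
    Finset ((ℝ × ℝ) × ℝ × ℝ) :=
  ((SF L d N 0 ×ˢ SF L d N 1) ×ˢ (SF L d N 0 ×ˢ SF L d N 1)).filter
    (fun p => u 0 * (p.1.1 - p.2.1) + u 1 * (p.1.2 - p.2.2) = 0)

lemma J2_eq (L d : Fin 2 → ℝ) (N : Fin 2 → ℕ) (u : EuclideanSpace ℝ (Fin 2)) :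
    J2 L d N u = (TF L d N u).card := by
  classical
  set Φ : EuclideanSpace ℝ (Fin 2) × EuclideanSpace ℝ (Fin 2) → (ℝ × ℝ) × ℝ × ℝ :=
    fun sp => ((sp.1 0, sp.1 1), (sp.2 0, sp.2 1)) with hΦdef
  have hΦ : Function.Injective Φ := by
    rintro ⟨s, p⟩ ⟨s', p'⟩ h
    simp only [hΦdef, Prod.mk.injEq] at h
    obtain ⟨⟨h1, h2⟩, h3, h4⟩ := h
    simp only [Prod.mk.injEq]
    constructor <;> · ext i; fin_cases i <;> assumption
  have himg : Φ '' {sp : EuclideanSpace ℝ (Fin 2) × EuclideanSpace ℝ (Fin 2) |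
      sp.1 ∈ grid2 L d N ∧ sp.2 ∈ grid2 L d N ∧ ⟪u, sp.1 - sp.2⟫ = 0} = ↑(TF L d N u) := by
    ext ⟨⟨a, b⟩, a', b'⟩
    simp only [Set.mem_image, Set.mem_setOf_eq, TF, Finset.coe_filter,
      Finset.mem_product, Prod.mk.injEq]
    constructor
    · rintro ⟨⟨s, p⟩, ⟨hs, hp, hip⟩, h⟩
      simp only [hΦdef, Prod.mk.injEq] at h
      obtain ⟨⟨rfl, rfl⟩, rfl, rfl⟩ := h
      obtain ⟨hs0, hs1⟩ := mem_grid2.1 hs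
      obtain ⟨hp0, hp1⟩ := mem_grid2.1 hp
      rw [inner_formula] at hip
      simp only [PiLp.sub_apply] at hip
      exact ⟨⟨⟨hs0, hs1⟩, hp0, hp1⟩, hip⟩
    · rintro ⟨⟨⟨ha, hb⟩, ha', hb'⟩, heq⟩
      refine ⟨((WithLp.equiv 2 _).symm ![a, b], (WithLp.equiv 2 _).symm ![a', b']),
        ⟨?_, ?_, ?_⟩, ?_⟩
      · exact mem_grid2.2 (by simpa using ⟨ha, hb⟩)
      · exact mem_grid2.2 (by simpa using ⟨ha', hb'⟩)
      · rw [inner_formula]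
        simpa using heq
      · simp [hΦdef]
  calc J2 L d N u = (Φ '' _).ncard := (Set.ncard_image_of_injective _ hΦ).symm
    _ = (↑(TF L d N u) : Set ((ℝ × ℝ) × ℝ × ℝ)).ncard := by rw [himg]
    _ = (TF L d N u).card := Set.ncard_coe_finset _

open Finset in
lemma count_lower (A B : Finset ℝ) :
    A.card * A.card * B.card ≤
      (((A ×ˢ B) ×ˢ (A ×ˢ B)).filter (fun p : (ℝ × ℝ) × ℝ × ℝ => p.1.2 = p.2.2)).card := by
  classical
  have h := Finset.card_le_card_of_injOn
    (f := fun x : (ℝ × ℝ) × ℝ => ((x.1.1, x.2), (x.1.2, x.2)))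
    (s := (A ×ˢ A) ×ˢ B)
    (t := ((A ×ˢ B) ×ˢ (A ×ˢ B)).filter (fun p : (ℝ × ℝ) × ℝ × ℝ => p.1.2 = p.2.2))
    (fun x hx => by
      simp only [Finset.mem_coe, Finset.mem_product] at hx
      simp only [Finset.mem_coe, Finset.mem_filter, Finset.mem_product]
      exact ⟨⟨⟨hx.1.1, hx.2⟩, hx.1.2, hx.2⟩, trivial⟩)
    (by
      rintro ⟨⟨x1, x2⟩, x3⟩ _ ⟨⟨y1, y2⟩, y3⟩ _ h
      simp only [Prod.mk.injEq] at h ⊢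
      exact ⟨⟨h.1.1, h.2.1⟩, h.1.2⟩)
  calc A.card * A.card * B.card = ((A ×ˢ A) ×ˢ B).card := by simp [Finset.card_product]
    _ ≤ _ := h

open Finset in
lemma count_upper {A B : Finset ℝ} {u0 u1 : ℝ} (hu0 : u0 ≠ 0) (hu1 : u1 ≠ 0)
    (hA : 2 ≤ A.card) (hB : B.Nonempty) :
    (((A ×ˢ B) ×ˢ (A ×ˢ B)).filter
      (fun p : (ℝ × ℝ) × ℝ × ℝ => u0 * (p.1.1 - p.2.1) + u1 * (p.1.2 - p.2.2) = 0)).card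
      < A.card * A.card * B.card := by
  classical
  set T := ((A ×ˢ B) ×ˢ (A ×ˢ B)).filter
    (fun p : (ℝ × ℝ) × ℝ × ℝ => u0 * (p.1.1 - p.2.1) + u1 * (p.1.2 - p.2.2) = 0) with hT
  have hTsub : ∀ x ∈ T, x.1.1 ∈ A ∧ x.1.2 ∈ B ∧ x.2.1 ∈ A ∧ x.2.2 ∈ B ∧
      u0 * (x.1.1 - x.2.1) + u1 * (x.1.2 - x.2.2) = 0 := by
    intro x hx
    simp only [hT, Finset.mem_filter, Finset.mem_product] at hx
    exact ⟨hx.1.1.1, hx.1.1.2, hx.1.2.1, hx.1.2.2, hx.2⟩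
  have hcard : T.card = ∑ aa ∈ A ×ˢ A,
      (T.filter (fun x => (x.1.1, x.2.1) = aa)).card :=
    Finset.card_eq_sum_card_fiberwise (fun x hx => by
      obtain ⟨h1, _, h3, _⟩ := hTsub x hx
      exact Finset.mem_product.2 ⟨h1, h3⟩)
  -- each fiber has at most B.card elements
  have key : ∀ aa ∈ A ×ˢ A, (T.filter (fun x => (x.1.1, x.2.1) = aa)).card ≤ B.card := by
    rintro ⟨a1, a2⟩ _
    apply Finset.card_le_card_of_injOn (fun x : (ℝ × ℝ) × ℝ × ℝ => x.1.2)
    · intro x hx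
      exact (hTsub x (Finset.mem_filter.1 hx).1).2.1
    · rintro x hx y hy hxy
      simp only [Finset.mem_coe, Finset.mem_filter, Prod.mk.injEq] at hx hy
      have hxT := hx.1
      have hx1 : x.1.1 = a1 := hx.2.1
      have hx2 : x.2.1 = a2 := hx.2.2
      have hyT := hy.1
      have hy1 : y.1.1 = a1 := hy.2.1
      have hy2 : y.2.1 = a2 := hy.2.2
      have h12 : x.1.2 = y.1.2 := hxy
      have ex := (hTsub x hxT).2.2.2.2
      have ey := (hTsub y hyT).2.2.2.2
      rw [hx1, hx2] at ex
      rw [hy1, hy2, ← h12] at ey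
      have h22 : x.2.2 = y.2.2 := by
        have h : u1 * x.2.2 = u1 * y.2.2 := by linear_combination ey - ex
        exact mul_left_cancel₀ hu1 h
      calc x = ((x.1.1, x.1.2), x.2.1, x.2.2) := rfl
        _ = ((y.1.1, y.1.2), y.2.1, y.2.2) := by rw [hx1, hy1, hx2, hy2, h12, h22]
        _ = y := rfl
  -- one fiber is strictly smaller
  obtain ⟨a, ha, a', ha', hne⟩ := Finset.one_lt_card.1 hA
  have strict : (T.filter (fun x => (x.1.1, x.2.1) = (a, a'))).card < B.card := by
    set c : ℝ := u0 * (a - a') / u1 with hc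
    have hcne : c ≠ 0 := by
      apply div_ne_zero _ hu1
      exact mul_ne_zero hu0 (sub_ne_zero.2 hne)
    -- on this fiber, x.2.2 = x.1.2 + c
    have hfib : ∀ x ∈ T.filter (fun x : (ℝ × ℝ) × ℝ × ℝ => (x.1.1, x.2.1) = (a, a')),
        x.1.2 ∈ B ∧ x.2.2 ∈ B ∧ x.2.2 = x.1.2 + c := by
      intro x hx
      simp only [Finset.mem_filter, Prod.mk.injEq] at hx
      have hxT := hx.1
      have h1 : x.1.1 = a := hx.2.1
      have h2 : x.2.1 = a' := hx.2.2
      obtain ⟨_, hb, _, hb', e⟩ := hTsub x hxT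
      refine ⟨hb, hb', ?_⟩
      rw [h1, h2] at e
      have h5 : u1 * x.2.2 = u1 * x.1.2 + u0 * (a - a') := by linear_combination -e
      have h6 : u1 * x.2.2 = u1 * (x.1.2 + c) := by
        rw [hc]
        field_simp
        linear_combination h5
      exact mul_left_cancel₀ hu1 h6
    rcases lt_trichotomy c 0 with hcpos | hczero | hcneg
    · -- c < 0 : the b-image avoids min' B
      have h := Finset.card_le_card_of_injOn (fun x : (ℝ × ℝ) × ℝ × ℝ => x.1.2)
        (s := T.filter (fun x => (x.1.1, x.2.1) = (a, a'))) (t := B.erase (B.min' hB))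
        (fun x hx => by
          obtain ⟨hb, hb', he⟩ := hfib x hx
          refine Finset.mem_erase.2 ⟨?_, hb⟩
          intro hmin
          have hmin' : x.1.2 = B.min' hB := hmin
          have h3 : B.min' hB ≤ x.2.2 := Finset.min'_le B x.2.2 hb'
          rw [he, hmin'] at h3
          linarith)
        (fun x hx y hy hxy => by
          obtain ⟨_, _, hex⟩ := hfib x (Finset.mem_coe.1 hx)
          obtain ⟨_, _, hey⟩ := hfib y (Finset.mem_coe.1 hy)
          simp only [Finset.mem_coe, Finset.mem_filter, Prod.mk.injEq] at hx hy
          have hxy' : x.1.2 = y.1.2 := hxy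
          have hx1 : x.1.1 = a := hx.2.1
          have hx2 : x.2.1 = a' := hx.2.2
          have hy1 : y.1.1 = a := hy.2.1
          have hy2 : y.2.1 = a' := hy.2.2
          have h22 : x.2.2 = y.2.2 := by rw [hex, hey, hxy']
          calc x = ((x.1.1, x.1.2), x.2.1, x.2.2) := rfl
            _ = ((y.1.1, y.1.2), y.2.1, y.2.2) := by
                rw [hx1, hy1, hx2, hy2, hxy', h22]
            _ = y := rfl)
      calc (T.filter (fun x => (x.1.1, x.2.1) = (a, a'))).card
          ≤ (B.erase (B.min' hB)).card := h
        _ < B.card := by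
            rw [Finset.card_erase_of_mem (B.min'_mem hB)]
            have := Finset.card_pos.2 hB
            omega
    · exact absurd hczero hcne
    · -- c > 0 : the b-image avoids values whose translate exceeds max' B
      have h := Finset.card_le_card_of_injOn (fun x : (ℝ × ℝ) × ℝ × ℝ => x.1.2)
        (s := T.filter (fun x => (x.1.1, x.2.1) = (a, a'))) (t := B.erase (B.max' hB))
        (fun x hx => by
          obtain ⟨hb, hb', he⟩ := hfib x hx
          refine Finset.mem_erase.2 ⟨?_, hb⟩
          intro hmax
          have hmax' : x.1.2 = B.max' hB := hmax
          have h3 : x.2.2 ≤ B.max' hB := Finset.le_max' B x.2.2 hb'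
          rw [he, hmax'] at h3
          linarith)
        (fun x hx y hy hxy => by
          obtain ⟨_, _, hex⟩ := hfib x (Finset.mem_coe.1 hx)
          obtain ⟨_, _, hey⟩ := hfib y (Finset.mem_coe.1 hy)
          simp only [Finset.mem_coe, Finset.mem_filter, Prod.mk.injEq] at hx hy
          have hxy' : x.1.2 = y.1.2 := hxy
          have hx1 : x.1.1 = a := hx.2.1
          have hx2 : x.2.1 = a' := hx.2.2
          have hy1 : y.1.1 = a := hy.2.1
          have hy2 : y.2.1 = a' := hy.2.2
          have h22 : x.2.2 = y.2.2 := by rw [hex, hey, hxy']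
          calc x = ((x.1.1, x.1.2), x.2.1, x.2.2) := rfl
            _ = ((y.1.1, y.1.2), y.2.1, y.2.2) := by
                rw [hx1, hy1, hx2, hy2, hxy', h22]
            _ = y := rfl)
      calc (T.filter (fun x => (x.1.1, x.2.1) = (a, a'))).card
          ≤ (B.erase (B.max' hB)).card := h
        _ < B.card := by
            rw [Finset.card_erase_of_mem (B.max'_mem hB)]
            have := Finset.card_pos.2 hB
            omega
  calc T.card = ∑ aa ∈ A ×ˢ A, (T.filter (fun x => (x.1.1, x.2.1) = aa)).card := hcard
    _ < ∑ _aa ∈ A ×ˢ A, B.card :=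
        Finset.sum_lt_sum key ⟨(a, a'), Finset.mem_product.2 ⟨ha, ha'⟩, strict⟩
    _ = A.card * A.card * B.card := by
        rw [Finset.sum_const, Finset.card_product, smul_eq_mul]

/-- Two-dimensional orientation proposition: every maximizer of `J₂` over the unit circle
is a signed standard basis vector. -/
theorem maximizer_is_wall_normal_2D (L d : Fin 2 → ℝ) (N : Fin 2 → ℕ)
    (hL : ∀ i, 0 < L i) (hd : ∀ i, 0 < d i ∧ d i < L i)
    (hN : ∀ i, 0 < N i ∧ Even (N i))
    (u : EuclideanSpace ℝ (Fin 2)) (hu : ‖u‖ = 1)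
    (hmax : ∀ v : EuclideanSpace ℝ (Fin 2), ‖v‖ = 1 → J2 L d N v ≤ J2 L d N u) :
    ∃ i : Fin 2, u = EuclideanSpace.single i 1 ∨ u = -EuclideanSpace.single i 1 := by
  classical
  have hnorm2 : u 0 ^ 2 + u 1 ^ 2 = 1 := by
    have h := hu
    rw [EuclideanSpace.norm_eq] at h
    rw [Real.sqrt_eq_one] at h
    simpa [Fin.sum_univ_two, Real.norm_eq_abs, sq_abs] using h
  by_cases h0 : u 0 = 0
  · refine ⟨1, ?_⟩
    have h1 : u 1 ^ 2 = 1 := by rw [h0] at hnorm2; linarith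
    have : (u 1 - 1) * (u 1 + 1) = 0 := by ring_nf; linarith
    rcases mul_eq_zero.1 this with h | h
    · left
      ext i; fin_cases i <;>
        simp [EuclideanSpace.single_apply, h0] <;> linarith
    · right
      ext i; fin_cases i <;>
        simp [EuclideanSpace.single_apply, h0] <;> linarith
  by_cases h1 : u 1 = 0
  · refine ⟨0, ?_⟩
    have h0' : u 0 ^ 2 = 1 := by rw [h1] at hnorm2; linarith
    have : (u 0 - 1) * (u 0 + 1) = 0 := by ring_nf; linarith
    rcases mul_eq_zero.1 this with h | h
    · left
      ext i; fin_cases i <;>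
        simp [EuclideanSpace.single_apply, h1] <;> linarith
    · right
      ext i; fin_cases i <;>
        simp [EuclideanSpace.single_apply, h1] <;> linarith
  exfalso
  -- facts about the coordinate sets
  have hhalf : ∀ i, 0 < N i / 2 := by
    intro i
    have hpos := (hN i).1
    obtain ⟨k, hk⟩ := (hN i).2
    omega
  have hdmem : ∀ i, d i ∈ SF L d N i := fun i =>
    mem_SF.2 ⟨1, 0, Or.inl rfl, ⟨le_refl _, by exact_mod_cast hhalf i⟩, by ring⟩
  have hndmem : ∀ i, -(d i) ∈ SF L d N i := fun i =>
    mem_SF.2 ⟨-1, 0, Or.inr rfl, ⟨le_refl _, by exact_mod_cast hhalf i⟩, by ring⟩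
  have hA2 : 2 ≤ (SF L d N 0).card :=
    Finset.one_lt_card.2 ⟨d 0, hdmem 0, -(d 0), hndmem 0, by have := (hd 0).1; intro h; linarith⟩
  have hBne : (SF L d N 1).Nonempty := ⟨d 1, hdmem 1⟩
  -- the comparison vector e₂
  set v : EuclideanSpace ℝ (Fin 2) := EuclideanSpace.single 1 1 with hv
  have hvnorm : ‖v‖ = 1 := by simp [hv, EuclideanSpace.norm_single]
  have hv0 : v 0 = 0 := by simp [hv, EuclideanSpace.single_apply]
  have hv1 : v 1 = 1 := by simp [hv, EuclideanSpace.single_apply]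
  have hle := hmax v hvnorm
  rw [J2_eq, J2_eq] at hle
  -- TF v is the "equal second coordinates" set
  have hTv : TF L d N v =
      ((SF L d N 0 ×ˢ SF L d N 1) ×ˢ (SF L d N 0 ×ˢ SF L d N 1)).filter
        (fun p : (ℝ × ℝ) × ℝ × ℝ => p.1.2 = p.2.2) := by
    apply Finset.filter_congr
    intro p _
    rw [hv0, hv1]
    constructor <;> intro h <;> linarith
  have hlow := count_lower (SF L d N 0) (SF L d N 1)
  rw [← hTv] at hlow
  have hup := count_upper h0 h1 hA2 hBne
  have : (TF L d N u).card <
      (SF L d N 0).card * (SF L d N 0).card * (SF L d N 1).card := by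
    simpa [TF] using hup
  omega
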